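/- arXiv:0910.0763 — 2 statements merged into one kernel-verified Lean document; each statement's English description precedes it below -/
import Mathlib

section
/- Let a, b, c, d be four independent centered Gaussian random variables, each with variance λ₂ > 0. Then E|ad − bc| = λ₂. Equivalently, the expected area of the parallelogram generated by two independent standard Gaussian vectors in ℝ² equals 1. Moreover, the distribution of |ad − bc|/λ₂ is that of the product of the square roots of two independent random variables with χ²(2) and χ²(1) distributions respectively. -/
open MeasureTheory ProbabilityTheory Real
open scoped ENNReal NNReal

/-- The chi-square distribution with `n` degrees of freedom, as the Gamma
distribution with shape `n/2` and rate `1/2`. -/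
noncomputable def chiSqMeasure (n : ℕ) : Measure ℝ := gammaMeasure ((n : ℝ) / 2) (1 / 2)

namespace DetAux

noncomputable def stdG : Measure ℝ := gaussianReal 0 1

instance : IsProbabilityMeasure stdG := by unfold stdG; infer_instance

/-- standard normal pdf -/
noncomputable def phi (x : ℝ) : ℝ := gaussianPDFReal 0 1 x

lemma phi_eq (x : ℝ) : phi x = (Real.sqrt (2*π))⁻¹ * rexp (-x^2/2) := by
  simp [phi, gaussianPDFReal]

lemma phi_nonneg (x : ℝ) : 0 ≤ phi x := gaussianPDFReal_nonneg 0 1 x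

lemma measurable_phi : Measurable phi := measurable_gaussianPDFReal 0 1

lemma phi_even (x : ℝ) : phi (-x) = phi x := by simp [phi_eq]

lemma stdG_eq : stdG = volume.withDensity (fun x => ENNReal.ofReal (phi x)) := by
  rw [stdG, gaussianReal_of_var_ne_zero 0 one_ne_zero]; rfl

/-- FTC: ∫_{0}^{a} r e^{-r²/2} = 1 - e^{-a²/2} -/
lemma integral_Ioc_r_exp {a : ℝ} (ha : 0 ≤ a) :
    ∫ r in Set.Ioc 0 a, r * rexp (-r^2/2) = 1 - rexp (-a^2/2) := by
  rw [← intervalIntegral.integral_of_le ha]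
  have key : ∀ x : ℝ, HasDerivAt (fun y : ℝ => -rexp (-y^2/2)) (x * rexp (-x^2/2)) x := by
    intro x
    have h1 : HasDerivAt (fun y : ℝ => -y^2/2) (-x) x := by
      have := ((hasDerivAt_pow 2 x).neg).div_const 2
      exact this.congr_deriv (by ring)
    have := (h1.exp).neg
    exact this.congr_deriv (by ring)
  rw [intervalIntegral.integral_eq_sub_of_hasDerivAt (fun x _ => key x) ?_]
  · simp
    ring
  · apply Integrable.intervalIntegrable
    have := integrable_mul_exp_neg_mul_sq (b := (1/2:ℝ)) (by norm_num)
    refine this.congr (Filter.Eventually.of_forall fun x => ?_)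
    ring_nf

lemma integral_Ioi_r_exp : ∫ r in Set.Ioi 0, r * rexp (-r^2/2) = 1 := by
  have key : ∀ x : ℝ, HasDerivAt (fun y : ℝ => -rexp (-y^2/2)) (x * rexp (-x^2/2)) x := by
    intro x
    have h1 : HasDerivAt (fun y : ℝ => -y^2/2) (-x) x := by
      have := ((hasDerivAt_pow 2 x).neg).div_const 2
      exact this.congr_deriv (by ring)
    have := (h1.exp).neg
    exact this.congr_deriv (by ring)
  have hint : IntegrableOn (fun x : ℝ => x * rexp (-x^2/2)) (Set.Ioi 0) := by
    apply Integrable.integrableOn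
    have := integrable_mul_exp_neg_mul_sq (b := (1/2:ℝ)) (by norm_num)
    convert this using 2 with x
    ring_nf
  have h1 : Filter.Tendsto (fun y : ℝ => -y^2/2) Filter.atTop Filter.atBot := by
    apply Filter.Tendsto.atBot_div_const (by norm_num : (0:ℝ) < 2)
    exact Filter.tendsto_neg_atTop_atBot.comp (Filter.tendsto_pow_atTop two_ne_zero)
  have htend : Filter.Tendsto (fun y : ℝ => -rexp (-y^2/2)) Filter.atTop (nhds 0) := by
    rw [← neg_zero]
    exact (Real.tendsto_exp_atBot.comp h1).neg
  rw [integral_Ioi_of_hasDerivAt_of_tendsto' (fun x _ => key x) hint htend]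
  simp

lemma integral_Ioi_r2_exp : ∫ r in Set.Ioi 0, r^2 * rexp (-r^2/2) = Real.sqrt (π/2) := by
  have hG : Real.Gamma (3/2) = Real.sqrt π / 2 := by
    rw [show (3/2 : ℝ) = 1/2 + 1 by norm_num, Real.Gamma_add_one (by norm_num),
      Real.Gamma_one_half_eq]
    ring
  have himg : (fun x : ℝ => x^2/2) '' Set.Ioi 0 = Set.Ioi 0 := by
    ext u
    simp only [Set.mem_image, Set.mem_Ioi]
    constructor
    · rintro ⟨x, hx, rfl⟩; positivity
    · intro hu
      exact ⟨Real.sqrt (2*u), by positivity, by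
        rw [Real.sq_sqrt (by positivity)]; ring⟩
  have hderiv : ∀ x ∈ Set.Ioi (0:ℝ), HasDerivWithinAt (fun x : ℝ => x^2/2) x (Set.Ioi 0) x := by
    intro x hx
    have h := (hasDerivAt_pow 2 x).div_const 2
    norm_num at h
    exact h.hasDerivWithinAt
  have hinj : Set.InjOn (fun x : ℝ => x^2/2) (Set.Ioi 0) := by
    intro a ha b hb h
    simp only at h
    have h2 : a^2 = b^2 := by linarith
    have h3 : |a| = |b| := by rw [← Real.sqrt_sq_eq_abs, ← Real.sqrt_sq_eq_abs, h2]
    rwa [abs_of_pos ha, abs_of_pos hb] at h3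
  have key := integral_image_eq_integral_abs_deriv_smul measurableSet_Ioi hderiv hinj
      (fun u => rexp (-u) * u ^ ((3:ℝ)/2 - 1))
  rw [himg] at key
  have hGint : Real.Gamma (3/2) = ∫ u in Set.Ioi 0, rexp (-u) * u ^ ((3:ℝ)/2 - 1) :=
    Real.Gamma_eq_integral (by norm_num)
  have hcong : ∫ x in Set.Ioi (0:ℝ), |x| • (rexp (-(x^2/2)) * (x^2/2) ^ ((3:ℝ)/2 - 1))
      = ∫ x in Set.Ioi (0:ℝ), (Real.sqrt 2)⁻¹ * (x^2 * rexp (-x^2/2)) := by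
    apply setIntegral_congr_fun measurableSet_Ioi
    intro x hx
    dsimp only
    have hx0 : (0:ℝ) < x := hx
    have h1 : ((3:ℝ)/2 - 1) = 1/2 := by norm_num
    have h2 : (x^2/2) ^ ((1:ℝ)/2) = x / Real.sqrt 2 := by
      rw [← Real.sqrt_eq_rpow, Real.sqrt_div (sq_nonneg x), Real.sqrt_sq_eq_abs,
        abs_of_pos hx0]
    rw [h1, h2, smul_eq_mul, abs_of_pos hx0, neg_div]
    field_simp
  rw [hcong] at key
  rw [integral_const_mul] at key
  have : ∫ x in Set.Ioi (0:ℝ), x^2 * rexp (-x^2/2)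
      = Real.sqrt 2 * Real.Gamma (3/2) := by
    rw [hGint, key]
    rw [← mul_assoc, mul_inv_cancel₀ (by positivity), one_mul]
  rw [this, hG, Real.sqrt_div (le_of_lt Real.pi_pos) 2,
    eq_div_iff (by positivity : Real.sqrt 2 ≠ 0),
    show Real.sqrt 2 * (Real.sqrt π / 2) * Real.sqrt 2
      = Real.sqrt π * (Real.sqrt 2 * Real.sqrt 2) / 2 from by ring,
    Real.mul_self_sqrt (by norm_num)]
  ring

/-- convolution of gaussian pdfs, real integral version -/
lemma conv1 {v₁ v₂ : ℝ≥0} (h₁ : v₁ ≠ 0) (h₂ : v₂ ≠ 0) (y : ℝ) :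
    ∫ x, gaussianPDFReal 0 v₁ x * gaussianPDFReal 0 v₂ (y - x) =
      gaussianPDFReal 0 (v₁ + v₂) y := by
  have ha : (0:ℝ) < v₁ := NNReal.coe_pos.mpr (pos_iff_ne_zero.mpr h₁)
  have hb : (0:ℝ) < v₂ := NNReal.coe_pos.mpr (pos_iff_ne_zero.mpr h₂)
  set a := (v₁ : ℝ) with hadef
  set b := (v₂ : ℝ) with hbdef
  have hab : (0:ℝ) < a + b := by linarith
  have ha' : a ≠ 0 := ha.ne'
  have hb' : b ≠ 0 := hb.ne'
  have hab' : a + b ≠ 0 := hab.ne'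
  have hB : (0:ℝ) < (a + b) / (2 * a * b) := by positivity
  have hpt : ∀ x : ℝ, gaussianPDFReal 0 v₁ x * gaussianPDFReal 0 v₂ (y - x)
      = ((Real.sqrt (2*π*a))⁻¹ * (Real.sqrt (2*π*b))⁻¹ * rexp (-y^2/(2*(a+b))))
        * rexp (-((a+b)/(2*a*b)) * (x - a*y/(a+b))^2) := by
    intro x
    simp only [gaussianPDFReal, sub_zero]
    rw [show (Real.sqrt (2*π*a))⁻¹ * rexp (-x^2/(2*a))
          * ((Real.sqrt (2*π*b))⁻¹ * rexp (-(y-x)^2/(2*b)))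
        = ((Real.sqrt (2*π*a))⁻¹ * (Real.sqrt (2*π*b))⁻¹)
          * (rexp (-x^2/(2*a)) * rexp (-(y-x)^2/(2*b))) from by ring,
      ← Real.exp_add,
      show -x^2/(2*a) + -(y-x)^2/(2*b)
        = -y^2/(2*(a+b)) + -((a+b)/(2*a*b)) * (x - a*y/(a+b))^2 from by
          field_simp
          ring,
      Real.exp_add]
    ring
  rw [integral_congr_ae (Filter.Eventually.of_forall hpt), integral_const_mul]
  have hgauss : ∫ x : ℝ, rexp (-((a+b)/(2*a*b)) * (x - a*y/(a+b))^2)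
      = Real.sqrt (π / ((a+b)/(2*a*b))) := by
    rw [integral_sub_right_eq_self (fun u => rexp (-((a+b)/(2*a*b)) * u^2)) (a*y/(a+b))]
    exact integral_gaussian _
  rw [hgauss]
  have hc : (Real.sqrt (2*π*a))⁻¹ * (Real.sqrt (2*π*b))⁻¹ * Real.sqrt (π / ((a+b)/(2*a*b)))
      = (Real.sqrt (2*π*(a+b)))⁻¹ := by
    rw [← Real.sqrt_inv (2*π*a), ← Real.sqrt_inv (2*π*b), ← Real.sqrt_inv (2*π*(a+b)),
      ← Real.sqrt_mul (by positivity), ← Real.sqrt_mul (by positivity)]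
    congr 1
    field_simp
  simp only [gaussianPDFReal, sub_zero, NNReal.coe_add, ← hadef, ← hbdef]
  rw [← hc]
  ring

/-- measure-level: sum of independent centered gaussians -/
lemma conv (v₁ v₂ : ℝ≥0) :
    Measure.map (fun p : ℝ × ℝ => p.1 + p.2)
      ((gaussianReal 0 v₁).prod (gaussianReal 0 v₂)) = gaussianReal 0 (v₁ + v₂) := by
  by_cases h₁ : v₁ = 0
  · subst h₁
    rw [gaussianReal_zero_var, zero_add, Measure.dirac_prod,
      Measure.map_map (by fun_prop) measurable_prodMk_left,
      show ((fun p : ℝ × ℝ => p.1 + p.2) ∘ (Prod.mk (0:ℝ))) = fun y : ℝ => y from by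
        funext y; simp]
    exact Measure.map_id
  by_cases h₂ : v₂ = 0
  · subst h₂
    rw [gaussianReal_zero_var, add_zero, Measure.prod_dirac,
      Measure.map_map (by fun_prop) (by fun_prop),
      show ((fun p : ℝ × ℝ => p.1 + p.2) ∘ (fun x : ℝ => (x, (0:ℝ)))) = fun y : ℝ => y from by
        funext y; simp]
    exact Measure.map_id
  have hv : v₁ + v₂ ≠ 0 := by simp [h₁]
  have hpdfm : Measurable (fun q : ℝ × ℝ => gaussianPDF q.1 v₂ q.2) := by
    have : (fun q : ℝ × ℝ => gaussianPDF q.1 v₂ q.2)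
        = fun q : ℝ × ℝ => ENNReal.ofReal (gaussianPDFReal 0 v₂ (q.2 - q.1)) := by
      funext q
      rw [gaussianPDF, gaussianPDFReal_sub, zero_add]
    rw [this]
    exact ((measurable_gaussianPDFReal 0 v₂).comp (measurable_snd.sub measurable_fst)).ennreal_ofReal
  ext s hs
  rw [Measure.map_apply (by fun_prop) hs,
    Measure.prod_apply (s := (fun p : ℝ × ℝ => p.1 + p.2) ⁻¹' s) ((measurable_fst.add measurable_snd) hs)]
  have hsec : ∀ x : ℝ, (gaussianReal 0 v₂) (Prod.mk x ⁻¹' ((fun p : ℝ × ℝ => p.1 + p.2) ⁻¹' s))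
      = ∫⁻ z in s, gaussianPDF x v₂ z := by
    intro x
    have h1 : Prod.mk x ⁻¹' ((fun p : ℝ × ℝ => p.1 + p.2) ⁻¹' s)
        = (fun y : ℝ => x + y) ⁻¹' s := rfl
    rw [h1, ← Measure.map_apply (by fun_prop) hs, gaussianReal_map_const_add x, zero_add,
      gaussianReal_apply _ h₂ s]
  rw [lintegral_congr hsec, gaussianReal_of_var_ne_zero 0 h₁]
  have hFmeas : Measurable (fun x : ℝ => ∫⁻ z in s, gaussianPDF x v₂ z) :=
    Measurable.lintegral_prod_right' (f := fun q : ℝ × ℝ => gaussianPDF q.1 v₂ q.2) hpdfm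
  rw [lintegral_withDensity_eq_lintegral_mul _ (measurable_gaussianPDF 0 v₁) hFmeas]
  simp only [Pi.mul_apply]
  have hswap : ∫⁻ x, gaussianPDF 0 v₁ x * ∫⁻ z in s, gaussianPDF x v₂ z
      = ∫⁻ z in s, ∫⁻ x, gaussianPDF 0 v₁ x * gaussianPDF x v₂ z := by
    have hcm : ∀ x : ℝ, gaussianPDF 0 v₁ x * ∫⁻ z in s, gaussianPDF x v₂ z
        = ∫⁻ z in s, gaussianPDF 0 v₁ x * gaussianPDF x v₂ z := fun x =>
      (lintegral_const_mul _ (hpdfm.comp measurable_prodMk_left)).symm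
    rw [lintegral_congr hcm, lintegral_lintegral_swap]
    exact (((measurable_gaussianPDF 0 v₁).comp measurable_fst).mul hpdfm).aemeasurable
  rw [hswap]
  have hbdd : ∀ u : ℝ, ‖gaussianPDFReal 0 v₂ u‖ ≤ (Real.sqrt (2*π*(v₂:ℝ)))⁻¹ := by
    intro u
    rw [Real.norm_eq_abs, abs_of_nonneg (gaussianPDFReal_nonneg 0 v₂ u), gaussianPDFReal,
      sub_zero]
    apply mul_le_of_le_one_right (by positivity)
    apply Real.exp_le_one_iff.mpr
    apply div_nonpos_of_nonpos_of_nonneg (neg_nonpos.mpr (sq_nonneg _)) (by positivity)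
  have hinner : ∀ z : ℝ, ∫⁻ x, gaussianPDF 0 v₁ x * gaussianPDF x v₂ z
      = gaussianPDF 0 (v₁ + v₂) z := by
    intro z
    have hrw : ∀ x : ℝ, gaussianPDF 0 v₁ x * gaussianPDF x v₂ z
        = ENNReal.ofReal (gaussianPDFReal 0 v₁ x * gaussianPDFReal 0 v₂ (z - x)) := by
      intro x
      rw [show gaussianPDF x v₂ z = ENNReal.ofReal (gaussianPDFReal 0 v₂ (z - x)) from by
          rw [gaussianPDF, gaussianPDFReal_sub, zero_add],
        gaussianPDF, ← ENNReal.ofReal_mul (gaussianPDFReal_nonneg 0 v₁ x)]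
    have hint : Integrable (fun x => gaussianPDFReal 0 v₁ x * gaussianPDFReal 0 v₂ (z - x)) := by
      have h0 : Integrable (fun x => gaussianPDFReal 0 v₂ (z - x) * gaussianPDFReal 0 v₁ x) :=
        Integrable.bdd_mul (integrable_gaussianPDFReal 0 v₁)
          (((measurable_gaussianPDFReal 0 v₂).comp (measurable_const.sub measurable_id)).aestronglyMeasurable)
          (c := (Real.sqrt (2*π*(v₂:ℝ)))⁻¹) (Filter.Eventually.of_forall fun x => hbdd (z - x))
      exact h0.congr (Filter.Eventually.of_forall fun x => mul_comm _ _)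
    simp_rw [hrw]
    rw [← ofReal_integral_eq_lintegral_ofReal hint
      (Filter.Eventually.of_forall fun x =>
        mul_nonneg (gaussianPDFReal_nonneg 0 v₁ x) (gaussianPDFReal_nonneg 0 v₂ (z - x))),
      conv1 h₁ h₂ z]
    rfl
  rw [setLIntegral_congr_fun hs (fun z _ => hinner z),
    ← gaussianReal_apply 0 hv s]

/-- linear combination of two std gaussians -/
lemma lin_comb (d c : ℝ) :
    Measure.map (fun p : ℝ × ℝ => p.1 * d + p.2 * c) (stdG.prod stdG)
      = gaussianReal 0 ((d^2 + c^2).toNNReal) := by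
  have hmap : (stdG.prod stdG).map (Prod.map (fun x : ℝ => x * d) (fun x : ℝ => x * c))
      = (gaussianReal 0 (NNReal.mk (d^2) (sq_nonneg d))).prod (gaussianReal 0 (NNReal.mk (c^2) (sq_nonneg c))) := by
    rw [← Measure.map_prod_map _ _ (measurable_mul_const d) (measurable_mul_const c)]
    unfold stdG
    rw [gaussianReal_map_mul_const d, gaussianReal_map_mul_const c]
    simp
  have hcomp : (fun p : ℝ × ℝ => p.1 * d + p.2 * c)
      = (fun p : ℝ × ℝ => p.1 + p.2) ∘ (Prod.map (fun x : ℝ => x * d) (fun x : ℝ => x * c)) :=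
    rfl
  rw [hcomp, ← Measure.map_map (by fun_prop) (by fun_prop), hmap, conv]
  congr 1
  apply NNReal.coe_injective
  rw [Real.coe_toNNReal _ (by positivity)]
  simp

/-- the key conditioning identity -/
lemma did :
    Measure.map (fun q : (ℝ × ℝ) × (ℝ × ℝ) => q.1.1 * q.2.1 - q.1.2 * q.2.2)
        ((stdG.prod stdG).prod (stdG.prod stdG))
      = Measure.map (fun p : ℝ × (ℝ × ℝ) => p.1 * Real.sqrt (p.2.1^2 + p.2.2^2))
          (stdG.prod (stdG.prod stdG)) := by
  have hm1 : Measurable (fun q : (ℝ × ℝ) × (ℝ × ℝ) => q.1.1 * q.2.1 - q.1.2 * q.2.2) := by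
    fun_prop
  have hm2 : Measurable (fun p : ℝ × (ℝ × ℝ) => p.1 * Real.sqrt (p.2.1^2 + p.2.2^2)) := by
    apply Measurable.mul measurable_fst
    exact (Real.continuous_sqrt.measurable).comp
      (((measurable_fst.comp measurable_snd).pow_const 2).add
        ((measurable_snd.comp measurable_snd).pow_const 2))
  ext s hs
  rw [Measure.map_apply hm1 hs, Measure.map_apply hm2 hs,
    Measure.prod_apply_symm (hm1 hs), Measure.prod_apply_symm (hm2 hs)]
  apply lintegral_congr
  intro y
  have h1 : ((fun x : ℝ × ℝ => (x, y)) ⁻¹'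
        ((fun q : (ℝ × ℝ) × (ℝ × ℝ) => q.1.1 * q.2.1 - q.1.2 * q.2.2) ⁻¹' s))
      = (fun x : ℝ × ℝ => x.1 * y.1 + x.2 * (-y.2)) ⁻¹' s := by
    ext x
    simp only [Set.mem_preimage, mul_neg, ← sub_eq_add_neg]
  have h2 : ((fun z : ℝ => (z, y)) ⁻¹'
        ((fun p : ℝ × (ℝ × ℝ) => p.1 * Real.sqrt (p.2.1^2 + p.2.2^2)) ⁻¹' s))
      = (fun z : ℝ => z * Real.sqrt (y.1^2 + y.2^2)) ⁻¹' s := rfl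
  rw [h1, h2, ← Measure.map_apply (by fun_prop) hs,
    ← Measure.map_apply (measurable_mul_const _) hs, lin_comb y.1 (-y.2)]
  show _ = (stdG.map fun z : ℝ => z * Real.sqrt (y.1^2 + y.2^2)) s
  unfold stdG
  rw [gaussianReal_map_mul_const (Real.sqrt (y.1^2 + y.2^2))]
  rw [mul_zero]
  congr 2
  apply NNReal.coe_injective
  rw [NNReal.coe_mul, NNReal.coe_one, mul_one, Real.coe_toNNReal _ (by positivity)]
  rw [NNReal.coe_mk, Real.sq_sqrt (by positivity)]
  ring

lemma integrable_phi : Integrable phi := integrable_gaussianPDFReal 0 1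

lemma integrable_phi2 : Integrable (fun p : ℝ × ℝ => phi p.1 * phi p.2)
    ((volume : Measure ℝ).prod volume) := integrable_phi.mul_prod integrable_phi

lemma stdG2_eq : stdG.prod stdG
    = (volume : Measure (ℝ × ℝ)).withDensity (fun p => ENNReal.ofReal (phi p.1 * phi p.2)) := by
  refine (Measure.prod_eq (μ := stdG) (ν := stdG)
    (μν := (volume : Measure (ℝ × ℝ)).withDensity (fun p => ENNReal.ofReal (phi p.1 * phi p.2)))
    (fun s t hs ht => ?_))
  rw [withDensity_apply _ (hs.prod ht), Measure.volume_eq_prod, ← Measure.prod_restrict]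
  have : ∀ p : ℝ × ℝ, ENNReal.ofReal (phi p.1 * phi p.2)
      = ENNReal.ofReal (phi p.1) * ENNReal.ofReal (phi p.2) :=
    fun p => ENNReal.ofReal_mul (phi_nonneg _)
  simp only [this]
  rw [lintegral_prod_mul measurable_phi.ennreal_ofReal.aemeasurable
    measurable_phi.ennreal_ofReal.aemeasurable, stdG_eq,
    withDensity_apply _ hs, withDensity_apply _ ht]

lemma stdG2_apply {E : Set (ℝ × ℝ)} (hE : MeasurableSet E) :
    (stdG.prod stdG) E = ENNReal.ofReal (∫ p in E, phi p.1 * phi p.2) := by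
  rw [stdG2_eq, withDensity_apply _ hE,
    ← ofReal_integral_eq_lintegral_ofReal]
  · exact integrable_phi2.integrableOn
  · exact Filter.Eventually.of_forall fun p => mul_nonneg (phi_nonneg _) (phi_nonneg _)

lemma phi_mul (x y : ℝ) : phi x * phi y = (2*π)⁻¹ * rexp (-(x^2+y^2)/2) := by
  rw [phi_eq, phi_eq,
    show (Real.sqrt (2*π))⁻¹ * rexp (-x^2/2) * ((Real.sqrt (2*π))⁻¹ * rexp (-y^2/2))
      = ((Real.sqrt (2*π))⁻¹ * (Real.sqrt (2*π))⁻¹) * (rexp (-x^2/2) * rexp (-y^2/2)) from by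
        ring,
    ← Real.exp_add, ← mul_inv, Real.mul_self_sqrt (by positivity)]
  congr 1
  ring

lemma stdG_integral (g : ℝ → ℝ) : ∫ x, g x ∂stdG = ∫ x, g x * phi x := by
  rw [stdG_eq,
    show (fun x => ENNReal.ofReal (phi x)) = (fun x => ((phi x).toNNReal : ℝ≥0∞)) from rfl,
    integral_withDensity_eq_integral_smul measurable_phi.real_toNNReal]
  congr 1
  ext x
  rw [NNReal.smul_def, Real.coe_toNNReal _ (phi_nonneg x), smul_eq_mul, mul_comm]

lemma stdG2_integral (g : ℝ × ℝ → ℝ) :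
    ∫ p, g p ∂(stdG.prod stdG) = ∫ p : ℝ × ℝ, g p * (phi p.1 * phi p.2) := by
  rw [stdG2_eq,
    show (fun p : ℝ × ℝ => ENNReal.ofReal (phi p.1 * phi p.2))
      = (fun p : ℝ × ℝ => (((phi p.1 * phi p.2).toNNReal) : ℝ≥0∞)) from rfl,
    integral_withDensity_eq_integral_smul
      (f := fun p : ℝ × ℝ => (phi p.1 * phi p.2).toNNReal)
      (((measurable_phi.comp measurable_fst).mul (measurable_phi.comp measurable_snd)).real_toNNReal)]
  congr 1
  ext p
  rw [NNReal.smul_def, Real.coe_toNNReal _ (mul_nonneg (phi_nonneg _) (phi_nonneg _)),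
    smul_eq_mul, mul_comm]

/-- polar coordinates computation -/
lemma polar_aux (f : ℝ → ℝ) :
    ∫ p : ℝ × ℝ, f (Real.sqrt (p.1^2 + p.2^2)) * (phi p.1 * phi p.2)
      = ∫ r in Set.Ioi 0, r * f r * rexp (-r^2/2) := by
  rw [← integral_comp_polarCoord_symm]
  have hset : MeasurableSet polarCoord.target := polarCoord.open_target.measurableSet
  rw [setIntegral_congr_fun hset (g := fun p : ℝ × ℝ => (p.1 * f p.1 * rexp (-p.1^2/2)) * (2*π)⁻¹)
    ?_]
  · rw [polarCoord_target, Measure.volume_eq_prod, ← Measure.prod_restrict,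
      integral_prod_mul (fun r => r * f r * rexp (-r^2/2)) (fun _ : ℝ => (2*π)⁻¹)]
    rw [integral_const, measureReal_restrict_apply_univ,
      Real.volume_real_Ioo_of_le (by linarith [Real.pi_pos] : -π ≤ π), smul_eq_mul]
    rw [show π - -π = 2 * π from by ring, mul_inv_cancel₀ (by positivity), mul_one]
  · rintro ⟨r, θ⟩ hp
    rw [polarCoord_target] at hp
    have hr : 0 < r := hp.1
    have hsq : (r * Real.cos θ)^2 + (r * Real.sin θ)^2 = r^2 := by
      calc (r * Real.cos θ)^2 + (r * Real.sin θ)^2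
          = r^2 * (Real.sin θ^2 + Real.cos θ^2) := by ring
        _ = r^2 := by rw [Real.sin_sq_add_cos_sq, mul_one]
    simp only [polarCoord_symm_apply, smul_eq_mul]
    rw [phi_mul, hsq, Real.sqrt_sq hr.le]
    ring

lemma gamma_integrable {a r : ℝ} (ha : 0 < a) (hr : 0 < r) :
    Integrable (gammaPDFReal a r) := by
  refine ⟨(measurable_gammaPDFReal a r).aestronglyMeasurable, ?_⟩
  rw [hasFiniteIntegral_iff_ofReal (Filter.Eventually.of_forall (gammaPDFReal_nonneg ha hr))]
  have := lintegral_gammaPDF_eq_one ha hr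
  rw [show (fun x => ENNReal.ofReal (gammaPDFReal a r x)) = gammaPDF a r from rfl, this]
  exact ENNReal.one_lt_top

lemma gamma_Iic {a r : ℝ} (ha : 0 < a) (hr : 0 < r) {t : ℝ} (ht : 0 ≤ t) :
    gammaMeasure a r (Set.Iic t)
      = ENNReal.ofReal (∫ x in Set.Ioc 0 t, gammaPDFReal a r x) := by
  rw [gammaMeasure, withDensity_apply _ measurableSet_Iic]
  have hsplit : Set.Iic t = Set.Iic 0 ∪ Set.Ioc 0 t := (Set.Iic_union_Ioc_eq_Iic ht).symm
  rw [hsplit, lintegral_union measurableSet_Ioc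
    (by rw [Set.disjoint_left]; intro x hx1 hx2; exact absurd hx2.1 (not_lt.mpr hx1))]
  rw [setLIntegral_congr Iio_ae_eq_Iic.symm, setLIntegral_congr_fun measurableSet_Iio
    (fun x (hx : x < 0) => gammaPDF_of_neg hx),
    lintegral_zero, zero_add]
  rw [ofReal_integral_eq_lintegral_ofReal ((gamma_integrable ha hr).integrableOn)
    (Filter.Eventually.of_forall (fun x => gammaPDFReal_nonneg ha hr x))]
  rfl

lemma gamma_Iic_neg {a r t : ℝ} (ht : t < 0) : gammaMeasure a r (Set.Iic t) = 0 := by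
  rw [gammaMeasure, withDensity_apply _ measurableSet_Iic]
  rw [setLIntegral_congr_fun measurableSet_Iic
    (fun x (hx : x ≤ t) => gammaPDF_of_neg (lt_of_le_of_lt hx ht))]
  simp

lemma integral_gamma1 {t : ℝ} (ht : 0 ≤ t) :
    ∫ x in Set.Ioc 0 t, gammaPDFReal 1 (1/2) x = 1 - rexp (-t/2) := by
  have hpt : ∀ x ∈ Set.Ioc (0:ℝ) t, gammaPDFReal 1 (1/2) x = (1/2) * rexp (-x/2) := by
    intro x hx
    rw [gammaPDFReal, if_pos hx.1.le, Real.Gamma_one, Real.rpow_one, sub_self, Real.rpow_zero,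
      show -((1:ℝ)/2 * x) = -x/2 from by ring]
    ring
  rw [setIntegral_congr_fun measurableSet_Ioc hpt, ← intervalIntegral.integral_of_le ht]
  have key : ∀ x : ℝ, HasDerivAt (fun y : ℝ => -rexp (-y/2)) ((1/2) * rexp (-x/2)) x := by
    intro x
    have h1 : HasDerivAt (fun y : ℝ => -y/2) (-(1:ℝ)/2) x := (hasDerivAt_id x).neg.div_const 2
    have := (h1.exp).neg
    exact this.congr_deriv (by ring)
  rw [intervalIntegral.integral_eq_sub_of_hasDerivAt (fun x _ => key x) ?_]
  · simp
    ring
  · apply ContinuousOn.intervalIntegrable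
    fun_prop

lemma sq_preimage_Iic {t : ℝ} (ht : 0 ≤ t) :
    (fun x : ℝ => x^2) ⁻¹' Set.Iic t = Set.Icc (-Real.sqrt t) (Real.sqrt t) := by
  ext x
  simp only [Set.mem_preimage, Set.mem_Iic, Set.mem_Icc]
  constructor
  · intro h
    have h2 := Real.sqrt_le_sqrt h
    rw [Real.sqrt_sq_eq_abs] at h2
    exact abs_le.mp h2
  · rintro ⟨h1, h2⟩
    have h3 : |x| ≤ Real.sqrt t := abs_le.mpr ⟨h1, h2⟩
    calc x^2 = |x|^2 := (sq_abs x).symm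
      _ ≤ (Real.sqrt t)^2 := by gcongr
      _ = t := Real.sq_sqrt ht

/-- chi-square with one degree of freedom -/
lemma A1 : gammaMeasure (1/2) (1/2) = Measure.map (fun x : ℝ => x^2) stdG := by
  have hmeas : Measurable fun x : ℝ => x^2 := measurable_id.pow_const 2
  have i1 : IsProbabilityMeasure (gammaMeasure (1/2) (1/2)) :=
    isProbabilityMeasure_gammaMeasure (by norm_num) (by norm_num)
  have i2 : IsProbabilityMeasure (Measure.map (fun x : ℝ => x^2) stdG) :=
    Measure.isProbabilityMeasure_map hmeas.aemeasurable
  refine Measure.ext_of_Iic _ _ (fun t => ?_)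
  rw [Measure.map_apply hmeas measurableSet_Iic]
  rcases lt_or_ge t 0 with ht | ht
  · rw [gamma_Iic_neg ht]
    have hempty : (fun x : ℝ => x^2) ⁻¹' Set.Iic t = ∅ := by
      ext x
      simp only [Set.mem_preimage, Set.mem_Iic, Set.mem_empty_iff_false, iff_false, not_le]
      exact lt_of_lt_of_le ht (sq_nonneg x)
    rw [hempty]
    simp
  · rw [gamma_Iic (by norm_num) (by norm_num) ht, sq_preimage_Iic ht]
    set a := Real.sqrt t with ha
    have ha0 : 0 ≤ a := Real.sqrt_nonneg t
    have hstd : stdG (Set.Icc (-a) a) = ENNReal.ofReal (∫ x in Set.Icc (-a) a, phi x) :=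
      gaussianReal_apply_eq_integral 0 one_ne_zero _
    rw [hstd]
    congr 1
    -- substitution on the gamma side
    have himg : (fun y : ℝ => y^2) '' Set.Ioc 0 a = Set.Ioc 0 t := by
      ext u
      simp only [Set.mem_image, Set.mem_Ioc]
      constructor
      · rintro ⟨y, ⟨hy0, hy1⟩, rfl⟩
        refine ⟨by positivity, ?_⟩
        calc y^2 ≤ a^2 := by gcongr
          _ = t := Real.sq_sqrt ht
      · rintro ⟨hu0, hu1⟩
        refine ⟨Real.sqrt u, ⟨Real.sqrt_pos.mpr hu0, Real.sqrt_le_sqrt hu1⟩, Real.sq_sqrt hu0.le⟩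
    have hderiv : ∀ y ∈ Set.Ioc (0:ℝ) a,
        HasDerivWithinAt (fun y : ℝ => y^2) (2*y) (Set.Ioc 0 a) y := by
      intro y _
      have h := hasDerivAt_pow 2 y
      norm_num at h
      exact h.hasDerivWithinAt
    have hinj : Set.InjOn (fun y : ℝ => y^2) (Set.Ioc 0 a) := by
      intro x hx y hy h
      simp only at h
      have h3 : |x| = |y| := by rw [← Real.sqrt_sq_eq_abs, ← Real.sqrt_sq_eq_abs, h]
      rwa [abs_of_pos hx.1, abs_of_pos hy.1] at h3
    have key := integral_image_eq_integral_abs_deriv_smul measurableSet_Ioc hderiv hinj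
      (gammaPDFReal (1/2) (1/2))
    rw [himg] at key
    rw [key]
    have hpt : ∀ y ∈ Set.Ioc (0:ℝ) a,
        |2*y| • gammaPDFReal (1/2) (1/2) (y^2) = 2 * phi y := by
      intro y hy
      have hy0 : 0 < y := hy.1
      rw [gammaPDFReal, if_pos (sq_nonneg y), smul_eq_mul]
      rw [show ((1:ℝ)/2 - 1) = -(1/2) from by norm_num,
        Real.rpow_neg (sq_nonneg y), ← Real.sqrt_eq_rpow, ← Real.sqrt_eq_rpow,
        Real.sqrt_sq hy0.le, Real.Gamma_one_half_eq, phi_eq,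
        show ((1:ℝ)/2) = 2⁻¹ from by norm_num, Real.sqrt_inv,
        abs_of_pos (by positivity : (0:ℝ) < 2*y),
        show -(2⁻¹ * y^2) = -y^2/2 from by ring,
        Real.sqrt_mul (by norm_num : (0:ℝ) ≤ 2) π]
      field_simp
    have hneg : ∫ x in (-a)..(0:ℝ), phi x = ∫ x in (0:ℝ)..a, phi x := by
      have h := intervalIntegral.integral_comp_neg (a := (0:ℝ)) (b := a) (f := phi)
      rw [neg_zero] at h
      rw [← h]
      apply intervalIntegral.integral_congr
      intro x _
      exact phi_even x
    have hgauss2 : ∫ x in Set.Icc (-a) a, phi x = ∫ x in Set.Ioc 0 a, 2 * phi x := by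
      have hsplit := intervalIntegral.integral_add_adjacent_intervals (a := -a) (b := 0) (c := a)
        (f := phi) (μ := volume) integrable_phi.intervalIntegrable
        integrable_phi.intervalIntegrable
      rw [integral_Icc_eq_integral_Ioc, ← intervalIntegral.integral_of_le (by linarith : -a ≤ a),
        ← hsplit, hneg, ← intervalIntegral.integral_of_le ha0,
        intervalIntegral.integral_const_mul]
      ring
    rw [setIntegral_congr_fun measurableSet_Ioc hpt, hgauss2]

/-- chi-square with two degrees of freedom -/
lemma A2 : gammaMeasure 1 (1/2)
    = Measure.map (fun p : ℝ × ℝ => p.1^2 + p.2^2) (stdG.prod stdG) := by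
  have hmeas : Measurable (fun p : ℝ × ℝ => p.1^2 + p.2^2) :=
    ((measurable_fst.pow_const 2).add (measurable_snd.pow_const 2))
  have i1 : IsProbabilityMeasure (gammaMeasure 1 (1/2)) :=
    isProbabilityMeasure_gammaMeasure one_pos (by norm_num)
  have i2 : IsProbabilityMeasure
      (Measure.map (fun p : ℝ × ℝ => p.1^2 + p.2^2) (stdG.prod stdG)) :=
    Measure.isProbabilityMeasure_map hmeas.aemeasurable
  refine Measure.ext_of_Iic _ _ (fun t => ?_)
  rw [Measure.map_apply hmeas measurableSet_Iic]
  rcases lt_or_ge t 0 with ht | ht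
  · rw [gamma_Iic_neg ht]
    have hempty : (fun p : ℝ × ℝ => p.1^2 + p.2^2) ⁻¹' Set.Iic t = ∅ := by
      ext p
      simp only [Set.mem_preimage, Set.mem_Iic, Set.mem_empty_iff_false, iff_false, not_le]
      exact lt_of_lt_of_le ht (by positivity)
    rw [hempty]
    simp
  · rw [gamma_Iic one_pos (by norm_num) ht, integral_gamma1 ht,
      stdG2_apply (hmeas measurableSet_Iic)]
    congr 1
    rw [← integral_indicator (hmeas measurableSet_Iic)]
    have hpt : ∀ p : ℝ × ℝ,
        Set.indicator ((fun p : ℝ × ℝ => p.1^2 + p.2^2) ⁻¹' Set.Iic t)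
          (fun p : ℝ × ℝ => phi p.1 * phi p.2) p
        = Set.indicator (Set.Iic (Real.sqrt t)) (fun _ => (1:ℝ)) (Real.sqrt (p.1^2 + p.2^2))
            * (phi p.1 * phi p.2) := by
      intro p
      by_cases hp : p.1^2 + p.2^2 ≤ t
      · rw [Set.indicator_of_mem
            (show p ∈ (fun p : ℝ × ℝ => p.1^2 + p.2^2) ⁻¹' Set.Iic t from hp),
          Set.indicator_of_mem
            (show Real.sqrt (p.1^2+p.2^2) ∈ Set.Iic (Real.sqrt t) from Real.sqrt_le_sqrt hp),
          one_mul]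
      · have hnm : Real.sqrt (p.1^2+p.2^2) ∉ Set.Iic (Real.sqrt t) := by
          intro hmem
          apply hp
          calc p.1^2 + p.2^2 = (Real.sqrt (p.1^2+p.2^2))^2 := (Real.sq_sqrt (by positivity)).symm
            _ ≤ (Real.sqrt t)^2 := pow_le_pow_left₀ (Real.sqrt_nonneg _) hmem 2
            _ = t := Real.sq_sqrt ht
        rw [Set.indicator_of_notMem
            (show p ∉ (fun p : ℝ × ℝ => p.1^2 + p.2^2) ⁻¹' Set.Iic t from hp),
          Set.indicator_of_notMem hnm, zero_mul]
    rw [integral_congr_ae (Filter.Eventually.of_forall hpt),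
      polar_aux (Set.indicator (Set.Iic (Real.sqrt t)) (fun _ => (1:ℝ)))]
    have hpt2 : ∀ r ∈ Set.Ioi (0:ℝ),
        r * Set.indicator (Set.Iic (Real.sqrt t)) (fun _ => (1:ℝ)) r * rexp (-r^2/2)
        = Set.indicator (Set.Iic (Real.sqrt t)) (fun r => r * rexp (-r^2/2)) r := by
      intro r _
      by_cases hr : r ∈ Set.Iic (Real.sqrt t)
      · rw [Set.indicator_of_mem hr, Set.indicator_of_mem hr, mul_one]
      · rw [Set.indicator_of_notMem hr, Set.indicator_of_notMem hr, mul_zero, zero_mul]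
    rw [setIntegral_congr_fun measurableSet_Ioi hpt2, integral_indicator measurableSet_Iic,
      Measure.restrict_restrict measurableSet_Iic,
      show Set.Iic (Real.sqrt t) ∩ Set.Ioi 0 = Set.Ioc 0 (Real.sqrt t) from by
        rw [Set.inter_comm, Set.Ioi_inter_Iic],
      integral_Ioc_r_exp (Real.sqrt_nonneg t), Real.sq_sqrt ht]

lemma E1 : ∫ x, |x| ∂stdG = Real.sqrt (2/π) := by
  rw [stdG_integral]
  have hint : Integrable (fun x : ℝ => |x| * phi x) := by
    have h0 : Integrable (fun x : ℝ => |x * rexp (-(1/2) * x^2)|) :=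
      (integrable_mul_exp_neg_mul_sq (by norm_num)).abs
    apply ((h0.const_mul (Real.sqrt (2*π))⁻¹).congr)
    apply Filter.Eventually.of_forall
    intro x
    dsimp only
    rw [phi_eq, abs_mul, abs_of_pos (Real.exp_pos _)]
    rw [show -(1/2) * x^2 = -x^2/2 from by ring]
    ring
  rw [← integral_add_compl (measurableSet_Ioi (a := (0:ℝ))) hint, Set.compl_Ioi]
  have hIic : ∫ x in Set.Iic (0:ℝ), |x| * phi x = ∫ x in Set.Ioi (0:ℝ), |x| * phi x := by
    rw [show Set.Iic (0:ℝ) = Set.Iic (-0) from by norm_num, ← integral_comp_neg_Ioi]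
    apply setIntegral_congr_fun measurableSet_Ioi
    intro x hx
    dsimp only
    rw [abs_neg, phi_even]
  have hpos : ∫ x in Set.Ioi (0:ℝ), |x| * phi x
      = (Real.sqrt (2*π))⁻¹ * ∫ x in Set.Ioi (0:ℝ), x * rexp (-x^2/2) := by
    rw [← integral_const_mul]
    apply setIntegral_congr_fun measurableSet_Ioi
    intro x hx
    dsimp only
    rw [abs_of_pos hx, phi_eq]
    ring
  rw [hIic, hpos, integral_Ioi_r_exp, mul_one]
  have h4 : Real.sqrt (2/π) = 2 * (Real.sqrt (2*π))⁻¹ := by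
    rw [show (2:ℝ)/π = 4/(2*π) from by rw [div_eq_div_iff (by positivity) (by positivity)]; ring]
    rw [Real.sqrt_div (by norm_num : (0:ℝ) ≤ 4), show (4:ℝ) = 2^2 from by norm_num,
      Real.sqrt_sq (by norm_num)]
    rw [div_eq_mul_inv]
  rw [h4]
  ring

lemma E2 : ∫ p : ℝ × ℝ, Real.sqrt (p.1^2 + p.2^2) ∂(stdG.prod stdG) = Real.sqrt (π/2) := by
  rw [stdG2_integral]
  have h := polar_aux (fun r => r)
  rw [h, ← integral_Ioi_r2_exp]
  apply setIntegral_congr_fun measurableSet_Ioi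
  intro r hr
  dsimp only
  ring

end DetAux

/-- If `a, b, c, d` are four independent centered Gaussian variables with common
variance `λ₂ > 0`, then `E|ad - bc| = λ₂`, and `|ad - bc|/λ₂` is distributed as the
product of the square roots of two independent `χ²(2)` and `χ²(1)` variables. -/
theorem expected_abs_det_gaussian_two_by_two
    {Ω : Type*} [MeasureSpace Ω] [IsProbabilityMeasure (ℙ : Measure Ω)]
    (f : Fin 4 → Ω → ℝ) (lam2 : ℝ) (hlam2 : 0 < lam2)
    (hindep : iIndepFun f ℙ)
    (hgauss : ∀ i, Measure.map (f i) ℙ = gaussianReal 0 lam2.toNNReal) :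
    (∫ ω, |f 0 ω * f 3 ω - f 1 ω * f 2 ω| ∂ℙ = lam2) ∧
    Measure.map (fun ω => |f 0 ω * f 3 ω - f 1 ω * f 2 ω| / lam2) ℙ
      = Measure.map (fun p : ℝ × ℝ => Real.sqrt p.1 * Real.sqrt p.2)
          ((chiSqMeasure 2).prod (chiSqMeasure 1)) := by
  classical
  set v := lam2.toNNReal with hvdef
  have hvne : v ≠ 0 := by
    simp only [hvdef, ne_eq, Real.toNNReal_eq_zero, not_le]
    exact hlam2
  set G : Measure ℝ := gaussianReal 0 v with hGdef
  have hmeas : ∀ i, AEMeasurable (f i) ℙ := by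
    intro i
    apply aemeasurable_of_map_neZero
    rw [hgauss i]
    infer_instance
  set Q : Ω → (ℝ × ℝ) × (ℝ × ℝ) := fun ω => ((f 0 ω, f 1 ω), (f 3 ω, f 2 ω)) with hQdef
  have hQm : AEMeasurable Q ℙ :=
    ((hmeas 0).prodMk (hmeas 1)).prodMk ((hmeas 3).prodMk (hmeas 2))
  have hPf : ∀ (i : Fin 4) (u : Set ℝ), MeasurableSet u → ℙ (f i ⁻¹' u) = G u := by
    intro i u hu
    rw [← Measure.map_apply_of_aemeasurable (hmeas i) hu, hgauss i]
  -- Step 1: the law of the quadruple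
  have hQlaw : Measure.map Q ℙ = (G.prod G).prod (G.prod G) := by
    set C : Set (Set (ℝ × ℝ)) :=
      Set.image2 (· ×ˢ ·) {s : Set ℝ | MeasurableSet s} {t : Set ℝ | MeasurableSet t} with hC
    have hCgen : (inferInstance : MeasurableSpace (ℝ × ℝ)) = MeasurableSpace.generateFrom C :=
      generateFrom_prod.symm
    have hCpi : IsPiSystem C := isPiSystem_prod
    have hCspan : IsCountablySpanning C :=
      (isCountablySpanning_measurableSet).prod (isCountablySpanning_measurableSet)
    set D : Set (Set ((ℝ × ℝ) × (ℝ × ℝ))) := Set.image2 (· ×ˢ ·) C C with hD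
    have hDgen : (inferInstance : MeasurableSpace ((ℝ × ℝ) × (ℝ × ℝ)))
        = MeasurableSpace.generateFrom D :=
      (generateFrom_eq_prod hCgen.symm hCgen.symm hCspan hCspan).symm
    have hDpi : IsPiSystem D := hCpi.prod hCpi
    have : IsProbabilityMeasure (Measure.map Q ℙ) := Measure.isProbabilityMeasure_map hQm
    refine MeasureTheory.ext_of_generate_finite D hDgen hDpi ?_ ?_
    · rintro - ⟨u1, ⟨s1, hs1, t1, ht1, rfl⟩, u2, ⟨s2, hs2, t2, ht2, rfl⟩, rfl⟩
      simp only [Set.mem_setOf_eq] at hs1 ht1 hs2 ht2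
      have hpre : Q ⁻¹' ((s1 ×ˢ t1) ×ˢ (s2 ×ˢ t2))
          = ⋂ i ∈ (Finset.univ : Finset (Fin 4)), f i ⁻¹' (![s1, t1, t2, s2] i) := by
        ext ω
        simp only [hQdef, Set.mem_preimage, Set.prodMk_mem_set_prod_eq, Set.mem_iInter,
          Finset.mem_univ, forall_const]
        constructor
        · rintro ⟨⟨h0, h1⟩, h3, h2⟩ i
          fin_cases i <;> simpa
        · intro h
          refine ⟨⟨?_, ?_⟩, ?_, ?_⟩
          · simpa using h 0
          · simpa using h 1
          · simpa using h 3
          · simpa using h 2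
      have hsets : ∀ i : Fin 4, MeasurableSet (![s1, t1, t2, s2] i) := by
        intro i
        fin_cases i <;> simpa
      rw [Measure.map_apply_of_aemeasurable hQm ((hs1.prod ht1).prod (hs2.prod ht2)), hpre,
        (iIndepFun_iff_measure_inter_preimage_eq_mul.mp hindep) Finset.univ
          (fun i _ => hsets i),
        Fin.prod_univ_four]
      rw [hPf 0 _ (hsets 0), hPf 1 _ (hsets 1), hPf 2 _ (hsets 2), hPf 3 _ (hsets 3)]
      rw [Measure.prod_prod, Measure.prod_prod, Measure.prod_prod]
      simp only [Matrix.cons_val_zero, Matrix.cons_val_one, Matrix.head_cons,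
        Matrix.cons_val_two, Matrix.tail_cons, Matrix.cons_val_three]
      ring
    · rw [Measure.map_apply_of_aemeasurable hQm MeasurableSet.univ]
      simp
  -- Step 2: scaling to the standard gaussian
  set σ := Real.sqrt lam2 with hσdef
  have hσσ : σ * σ = lam2 := Real.mul_self_sqrt hlam2.le
  have hGs : G = DetAux.stdG.map (fun x : ℝ => x * σ) := by
    unfold DetAux.stdG
    rw [gaussianReal_map_mul_const σ, mul_zero, hGdef]
    congr 1
    apply NNReal.coe_injective
    rw [NNReal.coe_mul, NNReal.coe_one, mul_one, NNReal.coe_mk, hvdef,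
      Real.coe_toNNReal _ hlam2.le, sq, hσσ]
  have hGG : G.prod G
      = (DetAux.stdG.prod DetAux.stdG).map
          (Prod.map (fun x : ℝ => x * σ) (fun x : ℝ => x * σ)) := by
    rw [← Measure.map_prod_map _ _ (measurable_mul_const σ) (measurable_mul_const σ), ← hGs]
  have h4 : (G.prod G).prod (G.prod G)
      = ((DetAux.stdG.prod DetAux.stdG).prod (DetAux.stdG.prod DetAux.stdG)).map
          (Prod.map (Prod.map (fun x : ℝ => x * σ) (fun x : ℝ => x * σ))
            (Prod.map (fun x : ℝ => x * σ) (fun x : ℝ => x * σ))) := by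
    rw [← Measure.map_prod_map _ _
      ((measurable_mul_const σ).prodMap (measurable_mul_const σ))
      ((measurable_mul_const σ).prodMap (measurable_mul_const σ)), ← hGG]
  have hm1 : Measurable (fun q : (ℝ × ℝ) × (ℝ × ℝ) => q.1.1 * q.2.1 - q.1.2 * q.2.2) := by
    fun_prop
  have hm2 : Measurable (fun p : ℝ × (ℝ × ℝ) => p.1 * Real.sqrt (p.2.1^2 + p.2.2^2)) := by
    apply Measurable.mul measurable_fst
    exact (Real.continuous_sqrt.measurable).comp
      (((measurable_fst.comp measurable_snd).pow_const 2).add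
        ((measurable_snd.comp measurable_snd).pow_const 2))
  have hgm : Measurable
      (fun q : (ℝ × ℝ) × (ℝ × ℝ) => |q.1.1 * q.2.1 - q.1.2 * q.2.2| / lam2) :=
    (hm1.abs).div_const lam2
  have hSm : Measurable (Prod.map (Prod.map (fun x : ℝ => x * σ) (fun x : ℝ => x * σ))
      (Prod.map (fun x : ℝ => x * σ) (fun x : ℝ => x * σ))) :=
    ((measurable_mul_const σ).prodMap (measurable_mul_const σ)).prodMap
      ((measurable_mul_const σ).prodMap (measurable_mul_const σ))
  -- Step 3: the standard-gaussian form of the law of |det|/lam2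
  have hstd : Measure.map (fun ω => |f 0 ω * f 3 ω - f 1 ω * f 2 ω| / lam2) ℙ
      = Measure.map (fun p : ℝ × (ℝ × ℝ) => |p.1| * Real.sqrt (p.2.1^2 + p.2.2^2))
          (DetAux.stdG.prod (DetAux.stdG.prod DetAux.stdG)) := by
    have hcompQ : (fun ω => |f 0 ω * f 3 ω - f 1 ω * f 2 ω| / lam2)
        = (fun q : (ℝ × ℝ) × (ℝ × ℝ) => |q.1.1 * q.2.1 - q.1.2 * q.2.2| / lam2) ∘ Q := rfl
    rw [hcompQ, ← AEMeasurable.map_map_of_aemeasurable hgm.aemeasurable hQm, hQlaw, h4,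
      Measure.map_map hgm hSm]
    have hcomp2 : ((fun q : (ℝ × ℝ) × (ℝ × ℝ) => |q.1.1 * q.2.1 - q.1.2 * q.2.2| / lam2)
          ∘ (Prod.map (Prod.map (fun x : ℝ => x * σ) (fun x : ℝ => x * σ))
            (Prod.map (fun x : ℝ => x * σ) (fun x : ℝ => x * σ))))
        = (fun x : ℝ => |x|) ∘ (fun q : (ℝ × ℝ) × (ℝ × ℝ) => q.1.1 * q.2.1 - q.1.2 * q.2.2) := by
      funext q
      simp only [Function.comp_apply, Prod.map_apply, Prod.map_fst, Prod.map_snd]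
      have hq : q.1.1 * σ * (q.2.1 * σ) - q.1.2 * σ * (q.2.2 * σ)
          = (q.1.1 * q.2.1 - q.1.2 * q.2.2) * lam2 := by
        rw [← hσσ]; ring
      rw [hq, abs_mul, abs_of_pos hlam2, mul_div_assoc, div_self hlam2.ne', mul_one]
    rw [hcomp2, ← Measure.map_map measurable_abs hm1, DetAux.did,
      Measure.map_map measurable_abs hm2]
    congr 1
    funext p
    simp only [Function.comp_apply]
    rw [abs_mul, abs_of_nonneg (Real.sqrt_nonneg _)]
  -- Step 4: the chi-square form of the same law
  have hn2m : Measurable (fun p : ℝ × ℝ => p.1^2 + p.2^2) :=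
    (measurable_fst.pow_const 2).add (measurable_snd.pow_const 2)
  have hsqm : Measurable (fun x : ℝ => x^2) := measurable_id.pow_const 2
  have hsqrtmul : Measurable (fun p : ℝ × ℝ => Real.sqrt p.1 * Real.sqrt p.2) :=
    ((Real.continuous_sqrt.measurable).comp measurable_fst).mul
      ((Real.continuous_sqrt.measurable).comp measurable_snd)
  have hfinal : Measurable (fun q : (ℝ × ℝ) × ℝ => Real.sqrt (q.1.1^2 + q.1.2^2) * |q.2|) := by
    apply Measurable.mul
    · exact (Real.continuous_sqrt.measurable).comp
        (((measurable_fst.comp measurable_fst).pow_const 2).add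
          ((measurable_snd.comp measurable_fst).pow_const 2))
    · exact measurable_snd.abs
  have hm2abs : Measurable (fun p : ℝ × (ℝ × ℝ) => |p.1| * Real.sqrt (p.2.1^2 + p.2.2^2)) :=
    measurable_fst.abs.mul ((Real.continuous_sqrt.measurable).comp
      (((measurable_fst.comp measurable_snd).pow_const 2).add
        ((measurable_snd.comp measurable_snd).pow_const 2)))
  have hchi : Measure.map (fun p : ℝ × ℝ => Real.sqrt p.1 * Real.sqrt p.2)
        ((chiSqMeasure 2).prod (chiSqMeasure 1))
      = Measure.map (fun p : ℝ × (ℝ × ℝ) => |p.1| * Real.sqrt (p.2.1^2 + p.2.2^2))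
          (DetAux.stdG.prod (DetAux.stdG.prod DetAux.stdG)) := by
    have h2 : chiSqMeasure 2 = gammaMeasure 1 (1/2) := by
      unfold chiSqMeasure; norm_num
    have h1 : chiSqMeasure 1 = gammaMeasure (1/2) (1/2) := by
      unfold chiSqMeasure; norm_num
    rw [h2, h1, DetAux.A2, DetAux.A1,
      Measure.map_prod_map _ _ hn2m hsqm,
      Measure.map_map hsqrtmul (hn2m.prodMap hsqm)]
    have hrhs2 : ((fun p : ℝ × ℝ => Real.sqrt p.1 * Real.sqrt p.2)
          ∘ (Prod.map (fun p : ℝ × ℝ => p.1^2 + p.2^2) (fun x : ℝ => x^2)))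
        = fun q : (ℝ × ℝ) × ℝ => Real.sqrt (q.1.1^2 + q.1.2^2) * |q.2| := by
      funext q
      simp only [Function.comp_apply, Prod.map_apply, Prod.map_fst, Prod.map_snd]
      rw [Real.sqrt_sq_eq_abs]
    rw [hrhs2,
      show DetAux.stdG.prod (DetAux.stdG.prod DetAux.stdG)
          = Measure.map Prod.swap ((DetAux.stdG.prod DetAux.stdG).prod DetAux.stdG) from
        Measure.prod_swap.symm,
      Measure.map_map hm2abs measurable_swap]
    congr 1
    funext q
    simp only [Function.comp_apply, Prod.fst_swap, Prod.snd_swap]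
    exact (mul_comm _ _)
  refine ⟨?_, hstd.trans hchi.symm⟩
  -- expectation
  have hdetm : AEMeasurable (fun ω => |f 0 ω * f 3 ω - f 1 ω * f 2 ω| / lam2) ℙ :=
    ((measurable_abs.comp_aemeasurable
      (((hmeas 0).mul (hmeas 3)).sub ((hmeas 1).mul (hmeas 2)))).div_const lam2)
  have hintrw : ∫ ω, |f 0 ω * f 3 ω - f 1 ω * f 2 ω| ∂ℙ
      = lam2 * ∫ ω, |f 0 ω * f 3 ω - f 1 ω * f 2 ω| / lam2 ∂ℙ := by
    rw [← integral_const_mul]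
    congr 1
    funext ω
    field_simp
  rw [hintrw]
  have hid : ∫ x, x ∂(Measure.map (fun ω => |f 0 ω * f 3 ω - f 1 ω * f 2 ω| / lam2) ℙ)
      = ∫ ω, |f 0 ω * f 3 ω - f 1 ω * f 2 ω| / lam2 ∂ℙ :=
    integral_map hdetm aestronglyMeasurable_id
  have hid2 : ∫ x, x ∂(Measure.map
        (fun p : ℝ × (ℝ × ℝ) => |p.1| * Real.sqrt (p.2.1^2 + p.2.2^2))
        (DetAux.stdG.prod (DetAux.stdG.prod DetAux.stdG)))
      = ∫ p : ℝ × (ℝ × ℝ), |p.1| * Real.sqrt (p.2.1^2 + p.2.2^2)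
          ∂(DetAux.stdG.prod (DetAux.stdG.prod DetAux.stdG)) :=
    integral_map hm2abs.aemeasurable aestronglyMeasurable_id
  rw [← hid, hstd, hid2,
    integral_prod_mul (fun x : ℝ => |x|) (fun y : ℝ × ℝ => Real.sqrt (y.1^2 + y.2^2)),
    DetAux.E1, DetAux.E2, ← Real.sqrt_mul (by positivity : (0:ℝ) ≤ 2/π),
    show (2/π) * (π/2) = 1 from by field_simp, Real.sqrt_one, mul_one]
end

section
/- Let S, P, γ be real numbers with P > 0, and suppose the quadratic polynomial X² − SX + P has no root in [0, ∞). Then ∫_{−∞}^{∞} (t² − γ)/(t⁴ − St² + P) dt = π·(√P − γ)/√(P·(−S + 2√P)). -/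
open MeasureTheory Real Filter Set

/-- If `P > 0` and `X² - SX + P` has no root in `[0, ∞)`, then
`∫_{-∞}^{∞} (t² - γ)/(t⁴ - St² + P) dt = π(√P - γ)/√(P(-S + 2√P))`. -/
theorem integral_rational_quartic
    (S P γ : ℝ) (hP : 0 < P)
    (hroot : ∀ x : ℝ, 0 ≤ x → x ^ 2 - S * x + P ≠ 0) :
    ∫ t : ℝ, (t ^ 2 - γ) / (t ^ 4 - S * t ^ 2 + P)
      = Real.pi * (Real.sqrt P - γ) / Real.sqrt (P * (-S + 2 * Real.sqrt P)) := by
  set a := Real.sqrt P with ha_def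
  have ha : 0 < a := Real.sqrt_pos.mpr hP
  have haP : a ^ 2 = P := Real.sq_sqrt hP.le
  -- S < 2a
  have hS : S < 2 * a := by
    by_contra h
    push_neg at h
    have hcont : ContinuousOn (fun x : ℝ => x ^ 2 - S * x + P) (Icc 0 a) := by
      fun_prop
    have hfa : a ^ 2 - S * a + P < 0 :=
      lt_of_le_of_ne (by nlinarith) (hroot a ha.le)
    have h0 : (0:ℝ) ∈ Icc (a ^ 2 - S * a + P) ((0:ℝ) ^ 2 - S * 0 + P) := by
      constructor <;> nlinarith
    obtain ⟨x, hx, hfx⟩ := intermediate_value_Icc' ha.le hcont h0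
    exact hroot x hx.1 hfx
  set c := Real.sqrt (2 * a - S) with hc_def
  have hc : 0 < c := Real.sqrt_pos.mpr (by linarith)
  have hc2 : c ^ 2 = 2 * a - S := Real.sq_sqrt (by linarith)
  have hD : ∀ t : ℝ, t ^ 4 - S * t ^ 2 + P = (t ^ 2 - a) ^ 2 + c ^ 2 * t ^ 2 := by
    intro t
    rw [hc2]
    nlinarith [haP]
  have hDpos : ∀ t : ℝ, 0 < t ^ 4 - S * t ^ 2 + P := by
    intro t
    rw [hD t]
    rcases eq_or_ne t 0 with rfl | ht
    · simpa using by nlinarith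
    · have h1 : 0 < c ^ 2 * t ^ 2 := by positivity
      nlinarith [sq_nonneg (t ^ 2 - a)]
  have hDne : ∀ t : ℝ, t ^ 4 - S * t ^ 2 + P ≠ 0 := fun t => (hDpos t).ne'
  -- antiderivative of f₁ = (t²+a)/D on (0,∞)
  set F : ℝ → ℝ := fun t => if t = 0 then -(π / (2 * c)) else (1 / c) * Real.arctan ((t - a / t) / c)
    with hF_def
  have hF0 : F 0 = -(π / (2 * c)) := by simp [hF_def]
  have hFderiv : ∀ t ∈ Ioi (0:ℝ), HasDerivAt F ((t ^ 2 + a) / (t ^ 4 - S * t ^ 2 + P)) t := by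
    intro t ht
    have ht0 : (0:ℝ) < t := ht
    have ht0' : t ≠ 0 := ht0.ne'
    have hu : HasDerivAt (fun t : ℝ => (t - a / t) / c) ((1 + a / t ^ 2) / c) t := by
      have h1 : HasDerivAt (fun t : ℝ => t - a / t) (1 + a / t ^ 2) t := by
        have h2 : HasDerivAt (fun t : ℝ => a / t) (-(a / t ^ 2)) t := by
          simpa [div_eq_mul_inv, sq] using ((hasDerivAt_inv ht0').const_mul a)
        exact ((hasDerivAt_id' t).sub h2).congr_deriv (by ring)
      exact h1.div_const c
    have harc := (Real.hasDerivAt_arctan ((t - a / t) / c)).comp t hu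
    have hformula : HasDerivAt (fun t : ℝ => (1 / c) * Real.arctan ((t - a / t) / c))
        ((1 / c) * ((1 / (1 + ((t - a / t) / c) ^ 2)) * ((1 + a / t ^ 2) / c))) t :=
      harc.const_mul (1 / c)
    have heq : (fun s : ℝ => (1 / c) * Real.arctan ((s - a / s) / c)) =ᶠ[nhds t] F := by
      filter_upwards [eventually_ne_nhds ht0'] with s hs
      simp [hF_def, hs]
    have hval : (1 / c) * ((1 / (1 + ((t - a / t) / c) ^ 2)) * ((1 + a / t ^ 2) / c))
        = (t ^ 2 + a) / (t ^ 4 - S * t ^ 2 + P) := by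
      have h1 : 1 + ((t - a / t) / c) ^ 2 ≠ 0 := by positivity
      rw [hD t]
      have h2 : (t ^ 2 - a) ^ 2 + c ^ 2 * t ^ 2 ≠ 0 := by rw [← hD t]; exact hDne t
      field_simp
      ring
    rw [← hval]
    exact hformula.congr_of_eventuallyEq heq.symm
  have hFtop : Tendsto F atTop (nhds (π / (2 * c))) := by
    have hu : Tendsto (fun t : ℝ => (t - a / t) / c) atTop atTop := by
      apply Tendsto.atTop_div_const hc
      apply tendsto_atTop_mono' _ _ (tendsto_atTop_add_const_right atTop (-a) tendsto_id)
      filter_upwards [eventually_ge_atTop (1:ℝ)] with t ht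
      have : a / t ≤ a := by
        rw [div_le_iff₀ (by linarith)]
        nlinarith
      simp only [id]
      linarith
    have harc : Tendsto (fun t : ℝ => (1 / c) * Real.arctan ((t - a / t) / c)) atTop
        (nhds ((1 / c) * (π / 2))) :=
      ((tendsto_nhds_of_tendsto_nhdsWithin Real.tendsto_arctan_atTop).comp hu).const_mul _
    have hv : (1 / c) * (π / 2) = π / (2 * c) := by ring
    rw [hv] at harc
    apply harc.congr'
    filter_upwards [eventually_gt_atTop (0:ℝ)] with t ht
    simp [hF_def, ht.ne']
  have hFcont : ContinuousWithinAt F (Ici 0) 0 := by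
    rw [← Set.Ioi_insert, continuousWithinAt_insert_self]
    have hu : Tendsto (fun t : ℝ => (t - a / t) / c) (nhdsWithin 0 (Ioi 0)) atBot := by
      apply Tendsto.atBot_div_const hc
      have h3 : Tendsto (fun t : ℝ => a / t) (nhdsWithin 0 (Ioi 0)) atTop := by
        simp only [div_eq_mul_inv]
        exact (tendsto_inv_nhdsGT_zero).const_mul_atTop ha
      have h4 : Tendsto (fun t : ℝ => -(a / t)) (nhdsWithin 0 (Ioi 0)) atBot := by
        simpa only [Function.comp_def] using tendsto_neg_atTop_atBot.comp h3
      have h2 : Tendsto (fun t : ℝ => 1 - a / t) (nhdsWithin 0 (Ioi 0)) atBot := by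
        simpa [sub_eq_add_neg] using tendsto_atBot_add_const_left _ (1:ℝ) h4
      apply tendsto_atBot_mono' _ _ h2
      filter_upwards [self_mem_nhdsWithin, eventually_nhdsWithin_of_eventually_nhds
        (eventually_le_nhds (by norm_num : (0:ℝ) < 1))] with t ht hle
      have : (0:ℝ) < t := ht
      linarith
    have harc : Tendsto (fun t : ℝ => (1 / c) * Real.arctan ((t - a / t) / c))
        (nhdsWithin 0 (Ioi 0)) (nhds ((1 / c) * (-(π / 2)))) :=
      ((tendsto_nhds_of_tendsto_nhdsWithin Real.tendsto_arctan_atBot).comp hu).const_mul _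
    have hv : (1 / c) * (-(π / 2)) = -(π / (2 * c)) := by ring
    rw [hv] at harc
    unfold ContinuousWithinAt
    rw [hF0]
    apply harc.congr'
    filter_upwards [self_mem_nhdsWithin] with t ht
    have : (0:ℝ) < t := ht
    simp [hF_def, this.ne']
  have hf1nonneg : ∀ t ∈ Ioi (0:ℝ), 0 ≤ (t ^ 2 + a) / (t ^ 4 - S * t ^ 2 + P) := by
    intro t _
    exact div_nonneg (by positivity) (hDpos t).le
  have hI1 : ∫ t in Ioi (0:ℝ), (t ^ 2 + a) / (t ^ 4 - S * t ^ 2 + P) = π / c := by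
    rw [integral_Ioi_of_hasDerivAt_of_nonneg hFcont hFderiv hf1nonneg hFtop, hF0]
    ring
  have hint1 : IntegrableOn (fun t : ℝ => (t ^ 2 + a) / (t ^ 4 - S * t ^ 2 + P)) (Ioi 0) :=
    integrableOn_Ioi_deriv_of_nonneg hFcont hFderiv hf1nonneg hFtop
  -- f₂ = (t²-a)/D
  have hcont2 : Continuous (fun t : ℝ => (t ^ 2 - a) / (t ^ 4 - S * t ^ 2 + P)) := by
    apply Continuous.div (by fun_prop) (by fun_prop) hDne
  have hint2 : IntegrableOn (fun t : ℝ => (t ^ 2 - a) / (t ^ 4 - S * t ^ 2 + P)) (Ioi 0) := by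
    apply Integrable.mono hint1 hcont2.aestronglyMeasurable.restrict
    apply ae_of_all
    intro t
    simp only [norm_eq_abs, abs_div]
    rw [abs_of_pos (hDpos t), abs_of_nonneg (by positivity : (0:ℝ) ≤ t ^ 2 + a)]
    gcongr
    · exact (hDpos t).le
    · exact abs_le.mpr ⟨by nlinarith, by nlinarith⟩
  have hI2 : ∫ t in Ioi (0:ℝ), (t ^ 2 - a) / (t ^ 4 - S * t ^ 2 + P) = 0 := by
    set g : ℝ → ℝ := fun t => (t ^ 2 - a) / (t ^ 4 - S * t ^ 2 + P) with hg_def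
    have step1 : ∫ x in Ioi (0:ℝ), g (a * x) = a⁻¹ • ∫ x in Ioi (0:ℝ), g x := by
      simpa [mul_zero] using integral_comp_mul_left_Ioi g 0 ha
    have step2 : ∫ x in Ioi (0:ℝ), (|(-1:ℝ)| * x ^ ((-1:ℝ) - 1)) • g (a * x ^ (-1:ℝ))
        = ∫ x in Ioi (0:ℝ), g (a * x) :=
      integral_comp_rpow_Ioi (fun x => g (a * x)) (by norm_num)
    have step3 : ∀ x ∈ Ioi (0:ℝ), (|(-1:ℝ)| * x ^ ((-1:ℝ) - 1)) • g (a * x ^ (-1:ℝ))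
        = -(a⁻¹ * g x) := by
      intro x hx
      have hx0 : (0:ℝ) < x := hx
      have hx1 : x ^ ((-1:ℝ)) = x⁻¹ := by
        rw [Real.rpow_neg hx0.le, Real.rpow_one]
      have hx2 : x ^ ((-1:ℝ) - 1) = (x ^ 2)⁻¹ := by
        rw [show (-1:ℝ) - 1 = -(2:ℕ) by norm_num, Real.rpow_neg hx0.le, Real.rpow_natCast]
      rw [hx1, hx2, hg_def]
      have hd1 : x ^ 4 - S * x ^ 2 + a ^ 2 ≠ 0 := by rw [haP]; exact hDne x
      have hd2 : (a * x⁻¹) ^ 4 - S * (a * x⁻¹) ^ 2 + a ^ 2 ≠ 0 := by rw [haP]; exact hDne _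
      simp only [smul_eq_mul, abs_neg, abs_one, one_mul]
      rw [← haP]
      have hxne : x ≠ 0 := hx0.ne'
      have key : ((a * x⁻¹) ^ 2 - a) / ((a * x⁻¹) ^ 4 - S * (a * x⁻¹) ^ 2 + a ^ 2)
          = (x ^ 2 * (a - x ^ 2)) / (a * (x ^ 4 - S * x ^ 2 + a ^ 2)) := by
        rw [div_eq_div_iff hd2 (mul_ne_zero ha.ne' hd1)]
        field_simp
        try ring
      rw [key]
      field_simp
      try ring
    have hcong : ∫ x in Ioi (0:ℝ), (|(-1:ℝ)| * x ^ ((-1:ℝ) - 1)) • g (a * x ^ (-1:ℝ))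
        = ∫ x in Ioi (0:ℝ), -(a⁻¹ * g x) := by
      exact setIntegral_congr_fun measurableSet_Ioi (fun x hx => step3 x hx)
    have : a⁻¹ • ∫ x in Ioi (0:ℝ), g x = -(a⁻¹ * ∫ x in Ioi (0:ℝ), g x) := by
      rw [← step1, ← step2, hcong, integral_neg, integral_const_mul]
    rw [smul_eq_mul] at this
    have ha' : a⁻¹ ≠ 0 := inv_ne_zero ha.ne'
    have := mul_left_cancel₀ ha' (by linarith [this] : a⁻¹ * (∫ x in Ioi (0:ℝ), g x) = a⁻¹ * 0)
    simpa using this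
  -- reduce the full-line integral to (0,∞) by evenness
  have habs : ∀ t : ℝ, (|t| ^ 2 - γ) / (|t| ^ 4 - S * |t| ^ 2 + P)
      = (t ^ 2 - γ) / (t ^ 4 - S * t ^ 2 + P) := by
    intro t
    rw [sq_abs, show |t| ^ 4 = t ^ 4 by rw [← abs_pow]; exact abs_of_nonneg (by positivity)]
  have heven : ∫ t : ℝ, (t ^ 2 - γ) / (t ^ 4 - S * t ^ 2 + P)
      = 2 * ∫ t in Ioi (0:ℝ), (t ^ 2 - γ) / (t ^ 4 - S * t ^ 2 + P) := by
    rw [← integral_comp_abs (f := fun t => (t ^ 2 - γ) / (t ^ 4 - S * t ^ 2 + P))]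
    exact integral_congr_ae (ae_of_all _ fun t => (habs t).symm)
  have hsplit : ∀ t : ℝ, (t ^ 2 - γ) / (t ^ 4 - S * t ^ 2 + P)
      = ((a - γ) / (2 * a)) * ((t ^ 2 + a) / (t ^ 4 - S * t ^ 2 + P))
        + ((a + γ) / (2 * a)) * ((t ^ 2 - a) / (t ^ 4 - S * t ^ 2 + P)) := by
    intro t
    have h1 := hDne t
    field_simp
    ring
  have hIoi : ∫ t in Ioi (0:ℝ), (t ^ 2 - γ) / (t ^ 4 - S * t ^ 2 + P)
      = ((a - γ) / (2 * a)) * (π / c) := by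
    simp only [hsplit]
    rw [integral_add (hint1.const_mul _) (hint2.const_mul _), integral_const_mul,
      integral_const_mul, hI1, hI2, mul_zero, add_zero]
  have hrhs : Real.sqrt (P * (-S + 2 * Real.sqrt P)) = a * c := by
    rw [← ha_def]
    have h1 : P * (-S + 2 * a) = (a * c) ^ 2 := by
      rw [mul_pow, hc2]
      nlinarith [haP]
    rw [h1, Real.sqrt_sq (by positivity)]
  rw [heven, hIoi, hrhs]
  field_simp
end
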